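/- Let D be a real sequence of length at least i, and let b_1 < ... < b_M be the borders of D[1..i−1]. Set b_{M+1} = i. Let N be the maximal integer with 2 ≤ N ≤ M+1 such that avg(D[b_{N−1}..i]) < avg(D[b_N..i]), or N = 1 if no such integer exists. Then the borders of D[1..i] are exactly b_1, ..., b_N. -/

import Mathlib

/-- Arithmetic mean of entries `a` through `b` of a (1-indexed) sequence. -/
noncomputable def avg (D : ℕ → ℝ) (a b : ℕ) : ℝ :=
    (∑ i ∈ Finset.Icc a b, D i) / (b - a + 1 : ℕ)

/-- `j` is a border of the prefix `D[1..n]`: there are no indices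
`a < j ≤ b ≤ n` with `avg(D[a..j−1]) ≥ avg(D[j..b])`. -/
def IsBorder (D : ℕ → ℝ) (n j : ℕ) : Prop :=
  1 ≤ j ∧ j ≤ n ∧
    ¬ ∃ a b, 1 ≤ a ∧ a < j ∧ j ≤ b ∧ b ≤ n ∧ avg D a (j - 1) ≥ avg D j b

noncomputable def psum (D : ℕ → ℝ) (k : ℕ) : ℝ := ∑ j ∈ Finset.Icc 1 k, D j

noncomputable def sl (D : ℕ → ℝ) (m y : ℕ) : ℝ := (psum D y - psum D m) / ((y : ℝ) - m)

lemma avg_eq (D : ℕ → ℝ) (a c : ℕ) (h1 : 1 ≤ a) (h2 : a ≤ c) :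
    avg D a c = sl D (a - 1) c := by
  unfold avg sl psum
  have e2 : Finset.Icc a c = Finset.Ioc (a - 1) c := by
    rw [← Finset.Icc_add_one_left_eq_Ioc]; congr 1; omega
  have e3 : ∀ k : ℕ, Finset.Icc 1 k = Finset.Ioc 0 k := fun k => by
    rw [← Finset.Icc_add_one_left_eq_Ioc]; rfl
  have hsum : (∑ j ∈ Finset.Ioc 0 (a-1), D j) + ∑ j ∈ Finset.Ioc (a-1) c, D j
      = ∑ j ∈ Finset.Ioc 0 c, D j :=
    Finset.sum_Ioc_consecutive _ (by omega) (by omega)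
  have hden : ((c - a + 1 : ℕ) : ℝ) = (c : ℝ) - ((a - 1 : ℕ) : ℝ) := by
    have h : (c - a + 1 : ℕ) = c - (a - 1) := by omega
    rw [h, Nat.cast_sub (by omega)]
  rw [e2, e3, e3, hden]
  congr 1
  linarith [hsum]

lemma sl_mul (D : ℕ → ℝ) (m y : ℕ) (h : m < y) :
    ((y : ℝ) - m) * sl D m y = psum D y - psum D m := by
  have hne : ((y : ℝ) - m) ≠ 0 := by
    have : (m : ℝ) < y := by exact_mod_cast h
    linarith
  rw [sl, mul_comm, div_mul_cancel₀ _ hne]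

lemma sl_combo (D : ℕ → ℝ) (m k y : ℕ) (h1 : m < k) (h2 : k < y) :
    ((y : ℝ) - m) * sl D m y = ((k : ℝ) - m) * sl D m k + ((y : ℝ) - k) * sl D k y := by
  rw [sl_mul D m y (h1.trans h2), sl_mul D m k h1, sl_mul D k y h2]; ring

lemma cast_pos_sub {m k : ℕ} (h : m < k) : (0 : ℝ) < (k : ℝ) - m := by
  have : (m : ℝ) < k := by exact_mod_cast h
  linarith

lemma sl_iffs (D : ℕ → ℝ) (m k y : ℕ) (h1 : m < k) (h2 : k < y) :
    (sl D m k < sl D k y ↔ sl D m k < sl D m y) ∧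
    (sl D m k < sl D k y ↔ sl D m y < sl D k y) := by
  have hp := cast_pos_sub h1
  have hq := cast_pos_sub h2
  have hc := sl_combo D m k y h1 h2
  constructor <;> constructor <;> intro h <;> nlinarith [hp, hq, hc]

lemma sl_bound (D : ℕ → ℝ) (m k y : ℕ) (c : ℝ) (h1 : m < k) (h2 : k < y)
    (hA : sl D m k < c) (hC : sl D k y < c) : sl D m y < c := by
  have hp := cast_pos_sub h1
  have hq := cast_pos_sub h2
  have hc := sl_combo D m k y h1 h2
  nlinarith [hp, hq, hc]

lemma sl_above (D : ℕ → ℝ) (m k y : ℕ) (h1 : m < k) (h2 : k < y)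
    (h : sl D k y ≤ sl D m k) :
    ((y : ℝ) - k) * psum D m + ((k : ℝ) - m) * psum D y ≤ ((y : ℝ) - m) * psum D k := by
  have hp := cast_pos_sub h1
  have hq := cast_pos_sub h2
  have e1 := sl_mul D m k h1
  have e2 := sl_mul D k y h2
  nlinarith [mul_pos hp hq, mul_le_mul_of_nonneg_left h (le_of_lt (mul_pos hp hq))]

lemma border_iff (D : ℕ → ℝ) (n j : ℕ) :
    IsBorder D n j ↔ (1 ≤ j ∧ j ≤ n ∧
      ∀ a y, 1 ≤ a → a < j → j ≤ y → y ≤ n → sl D (a - 1) (j - 1) < sl D (j - 1) y) := by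
  unfold IsBorder
  constructor
  · rintro ⟨h1, h2, h3⟩
    refine ⟨h1, h2, fun a y ha1 ha2 hy1 hy2 => ?_⟩
    by_contra hle
    push_neg at hle
    refine h3 ⟨a, y, ha1, ha2, hy1, hy2, ?_⟩
    rw [avg_eq D a (j-1) ha1 (by omega), avg_eq D j y (by omega) hy1]
    exact hle
  · rintro ⟨h1, h2, h3⟩
    refine ⟨h1, h2, ?_⟩
    rintro ⟨a, y, ha1, ha2, hy1, hy2, hge⟩
    have hlt := h3 a y ha1 ha2 hy1 hy2
    rw [avg_eq D a (j-1) ha1 (by omega), avg_eq D j y (by omega) hy1] at hge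
    linarith

set_option maxHeartbeats 3000000 in
/-- Border update: if `b 1 < ⋯ < b M` are the borders of `D[1..i−1]`, `b (M+1) = i`,
and `N` is the maximal integer in `[2, M+1]` with
`avg(D[b (N−1)..i]) < avg(D[b N..i])` (or `N = 1` if none exists), then the borders
of `D[1..i]` are exactly `b 1, …, b N`. -/
theorem borders_update (D : ℕ → ℝ) (i M N : ℕ) (b : ℕ → ℕ) (hi : 2 ≤ i)
    (hmono : StrictMonoOn b (Finset.Icc 1 (M + 1)))
    (hb : ∀ j, IsBorder D (i - 1) j ↔ ∃ t, 1 ≤ t ∧ t ≤ M ∧ b t = j)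
    (hlast : b (M + 1) = i)
    (hN : (2 ≤ N ∧ N ≤ M + 1 ∧ avg D (b (N - 1)) i < avg D (b N) i ∧
            ∀ t, 2 ≤ t → t ≤ M + 1 → avg D (b (t - 1)) i < avg D (b t) i → t ≤ N) ∨
          (N = 1 ∧ ∀ t, 2 ≤ t → t ≤ M + 1 → ¬ avg D (b (t - 1)) i < avg D (b t) i)) :
    ∀ j, IsBorder D i j ↔ ∃ t, 1 ≤ t ∧ t ≤ N ∧ b t = j := by
  classical
  -- basic facts
  have hone : IsBorder D (i-1) 1 := by
    refine ⟨le_refl 1, by omega, ?_⟩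
    rintro ⟨a, y, ha1, ha2, -, -, -⟩; omega
  obtain ⟨t1, ht1a, ht1b, ht1c⟩ := (hb 1).mp hone
  have hM : 1 ≤ M := le_trans ht1a ht1b
  have hmem : ∀ t, 1 ≤ t → t ≤ M + 1 → t ∈ Finset.Icc 1 (M+1) := by
    intro t h1 h2; simp [Finset.mem_Icc]; omega
  have blt : ∀ s t, 1 ≤ s → s < t → t ≤ M + 1 → b s < b t := by
    intro s t h1 h2 h3
    exact hmono (hmem s h1 (by omega)) (hmem t (by omega) h3) h2
  -- old borders in sl form
  have hOB : ∀ t, 1 ≤ t → t ≤ M → (1 ≤ b t ∧ b t ≤ i - 1 ∧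
      ∀ a y, 1 ≤ a → a < b t → b t ≤ y → y ≤ i - 1 →
        sl D (a-1) (b t - 1) < sl D (b t - 1) y) := by
    intro t h1 h2
    exact (border_iff D (i-1) (b t)).mp ((hb (b t)).mpr ⟨t, h1, h2, rfl⟩)
  have hbpos : ∀ t, 1 ≤ t → t ≤ M + 1 → 1 ≤ b t := by
    intro t h1 h2
    rcases Nat.lt_or_ge t (M+1) with h | h
    · exact (hOB t h1 (by omega)).1
    · have : t = M + 1 := by omega
      rw [this, hlast]; omega
  have hble : ∀ t, 1 ≤ t → t ≤ M + 1 → b t ≤ i := by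
    intro t h1 h2
    rcases Nat.lt_or_ge t (M+1) with h | h
    · have := (hOB t h1 (by omega)).2.1; omega
    · have : t = M + 1 := by omega
      rw [this, hlast]
  have hb1 : b 1 = 1 := by
    have h1 : 1 ≤ b 1 := hbpos 1 (le_refl 1) (by omega)
    have h2 : b 1 ≤ b t1 := by
      rcases Nat.lt_or_ge 1 t1 with h | h
      · exact le_of_lt (blt 1 t1 (le_refl 1) h (by omega))
      · have : t1 = 1 := by omega
        rw [this]
    omega
  -- convexity inequalities between consecutive old borders
  have vA : ∀ r s, 1 ≤ r → r + 2 ≤ s → s ≤ M + 1 →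
      sl D (b r - 1) (b (r+1) - 1) < sl D (b (r+1) - 1) (b s - 1) := by
    intro r s h1 h2 h3
    have hr1 : b r < b (r+1) := blt r (r+1) h1 (by omega) (by omega)
    have hrs : b (r+1) < b s := blt (r+1) s (by omega) (by omega) h3
    have := (hOB (r+1) (by omega) (by omega)).2.2 (b r) (b s - 1)
      (hbpos r h1 (by omega)) hr1 (by omega) (by have := hble s (by omega) h3; omega)
    have e : b r - 1 = b r - 1 := rfl
    convert this using 2 <;> omega
  have vB : ∀ s r, 1 ≤ s → s < r → r ≤ M →
      sl D (b s - 1) (b r - 1) < sl D (b r - 1) (b (r+1) - 1) := by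
    intro s r h1 h2 h3
    have hsr : b s < b r := blt s r h1 h2 (by omega)
    have hr1 : b r < b (r+1) := blt r (r+1) (by omega) (by omega) (by omega)
    have := (hOB r (by omega) h3).2.2 (b s) (b (r+1) - 1)
      (hbpos s h1 (by omega)) hsr (by omega) (by have := hble (r+1) (by omega) (by omega); omega)
    convert this using 2 <;> omega
  -- the hull
  set L : ℕ → ℕ → ℝ := fun r k =>
    psum D (b r - 1) + ((k : ℝ) - ((b r - 1 : ℕ) : ℝ)) * sl D (b r - 1) (b (r+1) - 1) with hL
  have hne : (Finset.Icc 1 M).Nonempty := Finset.nonempty_Icc.mpr hM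
  set H : ℕ → ℝ := fun k => (Finset.Icc 1 M).sup' hne (fun r => L r k) with hH
  have Lx1 : ∀ r, L r (b r - 1) = psum D (b r - 1) := by
    intro r; simp [hL]
  have Lx2 : ∀ r, 1 ≤ r → r ≤ M → L r (b (r+1) - 1) = psum D (b (r+1) - 1) := by
    intro r h1 h2
    have hlt : b r - 1 < b (r+1) - 1 := by
      have := blt r (r+1) h1 (by omega) (by omega)
      have := hbpos r h1 (by omega); omega
    have := sl_mul D (b r - 1) (b (r+1) - 1) hlt
    simp only [hL]; linarith
  have VX : ∀ s r, 1 ≤ s → s ≤ M + 1 → 1 ≤ r → r ≤ M →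
      L r (b s - 1) ≤ psum D (b s - 1) := by
    intro s r hs1 hs2 hr1 hr2
    rcases Nat.lt_trichotomy s r with h | h | h
    · -- s < r : left of the piece
      have hsr : b s < b r := blt s r hs1 h (by omega)
      have hlt : b s - 1 < b r - 1 := by have := hbpos s hs1 (by omega); omega
      have hvb := vB s r hs1 h hr2
      have e1 := sl_mul D (b s - 1) (b r - 1) hlt
      have hp := cast_pos_sub hlt
      simp only [hL]
      nlinarith [hp, hvb, e1]
    · rw [h, Lx1]
    · rcases Nat.eq_or_lt_of_le h with h' | h'
      · rw [← h', Lx2 r hr1 hr2]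
      · -- r + 1 < s : right of the piece
        have hva := vA r s hr1 (by omega) hs2
        have hlt : b (r+1) - 1 < b s - 1 := by
          have := blt (r+1) s (by omega) (by omega) hs2
          have := hbpos (r+1) (by omega) (by omega); omega
        have e1 := sl_mul D (b (r+1) - 1) (b s - 1) hlt
        have e2 := Lx2 r hr1 hr2
        have hp := cast_pos_sub hlt
        -- L r (b s - 1) = L r (b (r+1) - 1) + (X - k0) * slope
        have lin : L r (b s - 1) = L r (b (r+1) - 1) +
            (((b s - 1 : ℕ) : ℝ) - ((b (r+1) - 1 : ℕ) : ℝ)) * sl D (b r - 1) (b (r+1) - 1) := by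
          simp only [hL]; ring
        rw [lin, e2]
        nlinarith [hp, hva, e1]
  have Hx : ∀ s, 1 ≤ s → s ≤ M + 1 → H (b s - 1) = psum D (b s - 1) := by
    intro s h1 h2
    apply le_antisymm
    · apply Finset.sup'_le
      intro r hr
      simp only [Finset.mem_Icc] at hr
      exact VX s r h1 h2 hr.1 hr.2
    · rcases Nat.lt_or_ge s (M+1) with h | h
      · have : psum D (b s - 1) = L s (b s - 1) := (Lx1 s).symm
        rw [this]
        exact Finset.le_sup' (fun r => L r (b s - 1)) (Finset.mem_Icc.mpr ⟨h1, by omega⟩)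
      · have hs : s = M + 1 := by omega
        have : psum D (b s - 1) = L M (b s - 1) := by
          rw [hs]; exact (Lx2 M hM (le_refl M)).symm
        rw [this]
        exact Finset.le_sup' (fun r => L r (b s - 1)) (Finset.mem_Icc.mpr ⟨hM, le_refl M⟩)
  have Hpiece : ∀ r k, 1 ≤ r → r ≤ M → L r k ≤ H k := by
    intro r k h1 h2
    exact Finset.le_sup' (fun r => L r k) (Finset.mem_Icc.mpr ⟨h1, h2⟩)
  have Hconv : ∀ m k y : ℕ, m < k → k < y →
      ((y:ℝ) - m) * H k ≤ ((y:ℝ) - k) * H m + ((k:ℝ) - m) * H y := by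
    intro m k y h1 h2
    obtain ⟨r0, hr0, hEq⟩ := Finset.exists_mem_eq_sup' hne (fun r => L r k)
    simp only [Finset.mem_Icc] at hr0
    have lin : ((y:ℝ) - m) * L r0 k = ((y:ℝ) - k) * L r0 m + ((k:ℝ) - m) * L r0 y := by
      simp only [hL]; ring
    have h1' := cast_pos_sub h1
    have h2' := cast_pos_sub h2
    have hm := Hpiece r0 m hr0.1 hr0.2
    have hy := Hpiece r0 y hr0.1 hr0.2
    have hEq' : H k = L r0 k := hEq
    calc ((y:ℝ) - m) * H k = ((y:ℝ) - m) * L r0 k := by rw [hEq']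
      _ = ((y:ℝ) - k) * L r0 m + ((k:ℝ) - m) * L r0 y := lin
      _ ≤ ((y:ℝ) - k) * H m + ((k:ℝ) - m) * H y := by nlinarith [h1', h2', hm, hy]
  -- main hull inequality
  have Hmain : ∀ k, k ≤ i - 1 → H k ≤ psum D k := by
    by_contra hcon
    push_neg at hcon
    obtain ⟨k1, hk1, hlt1⟩ := hcon
    set d : ℕ → ℝ := fun k => H k - psum D k with hd
    have hdk : ∀ k, d k = H k - psum D k := fun k => rfl
    set T : Finset ℕ := Finset.Icc 0 (i-1) with hT
    have hmemT : ∀ k, k ≤ i - 1 → k ∈ T := by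
      intro k hk; rw [hT]; exact Finset.mem_Icc.mpr ⟨Nat.zero_le _, hk⟩
    have hTne : T.Nonempty := ⟨0, hmemT 0 (by omega)⟩
    set δ : ℝ := T.sup' hTne d with hδ
    have hsupd : ∀ k, k ≤ i - 1 → d k ≤ δ := by
      intro k hk; rw [hδ]; exact Finset.le_sup' d (hmemT k hk)
    have hδpos : 0 < δ := by
      have h1 := hsupd k1 hk1
      have h2 : 0 < d k1 := by rw [hdk k1]; linarith
      linarith
    set W : Finset ℕ := T.filter (fun k => δ ≤ d k) with hW
    have hWne : W.Nonempty := by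
      obtain ⟨k2, hk2, hEq⟩ := Finset.exists_mem_eq_sup' hTne d
      refine ⟨k2, ?_⟩
      rw [hW]
      exact Finset.mem_filter.mpr ⟨hk2, by rw [hδ]; exact le_of_eq hEq⟩
    set k0 : ℕ := W.min' hWne with hk0
    have hk0W : k0 ∈ W := Finset.min'_mem W hWne
    have hk0W' := hk0W
    rw [hW, Finset.mem_filter, hT, Finset.mem_Icc] at hk0W'
    have hk0le : k0 ≤ i - 1 := hk0W'.1.2
    have hk0d : δ ≤ d k0 := hk0W'.2
    have hd_border : ∀ s, 1 ≤ s → s ≤ M + 1 → d (b s - 1) = 0 := by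
      intro s h1 h2
      rw [hdk, Hx s h1 h2]; ring
    have hk0pos : 1 ≤ k0 := by
      by_contra h
      have h0 : k0 = 0 := by omega
      have hz : d k0 = 0 := by
        have := hd_border 1 (le_refl 1) (by omega)
        rw [hb1] at this
        rw [h0]; simpa using this
      linarith
    have hk0top : k0 + 1 ≤ i - 1 := by
      by_contra h
      have h0 : k0 = i - 1 := by omega
      have hz : d k0 = 0 := by
        have := hd_border (M+1) (by omega) (le_refl _)
        rw [hlast] at this
        rw [h0]; exact this
      linarith
    have hnotb : ¬ IsBorder D (i-1) (k0+1) := by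
      intro hB
      obtain ⟨t, ht1, ht2, ht3⟩ := (hb _).mp hB
      have hbt : 1 ≤ b t := hbpos t ht1 (by omega)
      have he : k0 = b t - 1 := by omega
      rw [he] at hk0d
      rw [hd_border t ht1 (by omega)] at hk0d
      linarith
    rw [border_iff] at hnotb
    push_neg at hnotb
    obtain ⟨a, y, ha1, ha2, hy1, hy2, hge⟩ := hnotb (by omega) (by omega)
    have hsimp : k0 + 1 - 1 = k0 := by omega
    rw [hsimp] at hge
    have hmk : a - 1 < k0 := by omega
    have hky : k0 < y := by omega
    have habove := sl_above D (a-1) k0 y hmk hky hge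
    have hcv := Hconv (a-1) k0 y hmk hky
    have hdm : d (a-1) ≤ δ := hsupd (a-1) (by omega)
    have hdy : d y ≤ δ := hsupd y (by omega)
    have hp := cast_pos_sub hmk
    have hq := cast_pos_sub hky
    have e1 : ((y:ℝ) - (a-1:ℕ)) * d k0 ≤ ((y:ℝ) - k0) * d (a-1) + ((k0:ℝ) - (a-1:ℕ)) * d y := by
      rw [hdk k0, hdk (a-1), hdk y]
      nlinarith [hcv, habove]
    have e2 : ((y:ℝ) - (a-1:ℕ)) * δ ≤ ((y:ℝ) - (a-1:ℕ)) * d k0 :=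
      mul_le_mul_of_nonneg_left hk0d (by linarith)
    have e3 : ((k0:ℝ) - (a-1:ℕ)) * d y ≤ ((k0:ℝ) - (a-1:ℕ)) * δ :=
      mul_le_mul_of_nonneg_left hdy (le_of_lt hp)
    have hdm' : δ ≤ d (a-1) := by
      by_contra hcc
      push_neg at hcc
      have := mul_lt_mul_of_pos_left hcc hq
      linarith
    have hminW : (a-1) ∈ W := by
      rw [hW]
      exact Finset.mem_filter.mpr ⟨hmemT (a-1) (by omega), hdm'⟩
    have := Finset.min'_le W (a-1) hminW
    omega
  -- Lemma L : points between consecutive borders lie above the chord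
  have LemL : ∀ s k, 1 ≤ s → s ≤ M → b s - 1 < k → k < b (s+1) - 1 →
      sl D k (b (s+1) - 1) ≤ sl D (b s - 1) k := by
    intro s k h1 h2 h3 h4
    have hk_le : k ≤ i - 1 := by
      have := hble (s+1) (by omega) (by omega); omega
    have hLs : L s k ≤ H k := Hpiece s k h1 h2
    have hHk : H k ≤ psum D k := Hmain k hk_le
    have e1 := sl_mul D (b s - 1) k h3
    have hp := cast_pos_sub h3
    -- from psum ≥ L s k : sl (b s -1) (b (s+1) -1) ≤ sl (b s -1) k
    have key : sl D (b s - 1) (b (s+1) - 1) ≤ sl D (b s - 1) k := by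
      have : L s k = psum D (b s - 1) + (((k:ℕ):ℝ) - ((b s - 1 : ℕ):ℝ)) * sl D (b s - 1) (b (s+1) - 1) := by
        simp only [hL]
      nlinarith [hp, e1, hLs, hHk, this]
    -- 3pt: B ≤ A variant
    by_contra hcon
    push_neg at hcon
    have hiff := sl_iffs D (b s - 1) k (b (s+1) - 1) h3 h4
    have : sl D (b s - 1) k < sl D (b s - 1) (b (s+1) - 1) := hiff.1.mp hcon
    linarith
  -- new slopes
  set g : ℕ → ℝ := fun t => sl D (b t - 1) i with hg
  have havg : ∀ t, 1 ≤ t → t ≤ M + 1 → avg D (b t) i = g t :=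
    fun t h1 h2 => avg_eq D (b t) i (hbpos t h1 h2) (hble t h1 h2)
  have hxi : ∀ t, 1 ≤ t → t ≤ M + 1 → b t - 1 < i := by
    intro t h1 h2; have := hble t h1 h2; omega
  have hxlt : ∀ s t, 1 ≤ s → s < t → t ≤ M + 1 → b s - 1 < b t - 1 := by
    intro s t h1 h2 h3
    have := blt s t h1 h2 h3; have := hbpos s h1 (by omega); omega
  -- one-step down: for t ≥ N
  have gdown1 : ∀ t, N ≤ t → 1 ≤ t → t ≤ M → g (t+1) ≤ g t := by
    intro t htN ht1 htM
    by_contra hcon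
    push_neg at hcon
    rcases hN with ⟨hN2, hNM, hNlt, hmax⟩ | ⟨hN1, hnone⟩
    · have h2 : 2 ≤ t + 1 := by omega
      have := hmax (t+1) h2 (by omega) (by
        have e : t + 1 - 1 = t := by omega
        rw [e, havg t ht1 (by omega), havg (t+1) (by omega) (by omega)]
        exact hcon)
      omega
    · exact hnone (t+1) (by omega) (by omega) (by
        have e : t + 1 - 1 = t := by omega
        rw [e, havg t ht1 (by omega), havg (t+1) (by omega) (by omega)]
        exact hcon)
  -- one-step up, case A
  have gup1 : 2 ≤ N → ∀ t, 1 ≤ t → t + 1 ≤ N → g t < g (t+1) := by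
    intro hN2 t
    rcases hN with ⟨_, hNM, hNlt, _⟩ | ⟨hN1, _⟩
    swap
    · omega
    have hNlt' : g (N-1) < g N := by
      rw [havg (N-1) (by omega) (by omega), havg N (by omega) hNM] at hNlt
      exact hNlt
    -- downward induction via k := N - 1 - t
    have key : ∀ kk t, 1 ≤ t → t + kk + 1 = N → g t < g (t+1) := by
      intro kk
      induction kk with
      | zero =>
        intro t h1 h2
        have : t = N - 1 := by omega
        rw [this]
        have e : N - 1 + 1 = N := by omega
        rw [e]
        exact hNlt'
      | succ k ih =>
        intro t h1 h2
        have ih1 : g (t+1) < g (t+2) := by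
          have := ih (t+1) (by omega) (by omega)
          convert this using 2 <;> omega
        -- 3pt manipulations
        have hx12 : b (t+1) - 1 < b (t+2) - 1 := hxlt (t+1) (t+2) (by omega) (by omega) (by omega)
        have hx2i : b (t+2) - 1 < i := hxi (t+2) (by omega) (by omega)
        have hiff1 := sl_iffs D (b (t+1) - 1) (b (t+2) - 1) i hx12 hx2i
        -- g(t+1) < g(t+2) is B < C : gives A < C and A < B
        have hAC : sl D (b (t+1) - 1) (b (t+2) - 1) < sl D (b (t+2) - 1) i := hiff1.2.mpr ih1
        have hAB : sl D (b (t+1) - 1) (b (t+2) - 1) < g (t+1) := by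
          simp only [hg]
          exact hiff1.1.mp hAC
        have hvA : sl D (b t - 1) (b (t+1) - 1) < sl D (b (t+1) - 1) (b (t+2) - 1) :=
          vA t (t+2) h1 (by omega) (by omega)
        have hchain : sl D (b t - 1) (b (t+1) - 1) < g (t+1) := lt_trans hvA hAB
        have hx01 : b t - 1 < b (t+1) - 1 := hxlt t (t+1) h1 (by omega) (by omega)
        have hx1i : b (t+1) - 1 < i := hxi (t+1) (by omega) (by omega)
        have hiff0 := sl_iffs D (b t - 1) (b (t+1) - 1) i hx01 hx1i
        -- A < C gives B < C i.e. g t < g (t+1); but we have A < B' where B' = sl mid i = C here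
        -- here: m = b t -1, k = b (t+1) -1, y = i; sl m k < sl k y  ⇒ sl m y < sl k y
        simp only [hg]
        exact hiff0.2.mp (by simpa [hg] using hchain)
    intro h1 h2
    exact key (N - 1 - t) t h1 (by omega)
  -- chain up: g t < g N for t < N
  have gupN : ∀ t, 1 ≤ t → t < N → g t < g N := by
    have hN2 : ∀ t, 1 ≤ t → t < N → 2 ≤ N := by intro t h1 h2; omega
    intro t h1 h2
    have key : ∀ kk t, 1 ≤ t → t + kk + 1 = N → g t < g N := by
      intro kk
      induction kk with
      | zero =>
        intro t h1 h2
        have := gup1 (by omega) t h1 (by omega)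
        have e : t + 1 = N := by omega
        rwa [e] at this
      | succ k ih =>
        intro t h1 h2
        have h3 := gup1 (by omega) t h1 (by omega)
        have h4 := ih (t+1) (by omega) (by omega)
        linarith
    exact key (N - 1 - t) t h1 (by omega)
  have hNM1 : N ≤ M + 1 := by
    rcases hN with ⟨_, h, _, _⟩ | ⟨h, _⟩ <;> omega
  have hN1 : 1 ≤ N := by
    rcases hN with ⟨h, _, _, _⟩ | ⟨h, _⟩ <;> omega
  -- final equivalence
  intro j
  rw [border_iff]
  constructor
  · rintro ⟨hj1, hj2, hcond⟩
    rcases Nat.lt_or_ge j i with hji | hji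
    · -- j ≤ i - 1 : old border
      have hold : IsBorder D (i-1) j := by
        rw [border_iff]
        exact ⟨hj1, by omega, fun a y ha1 ha2 hy1 hy2 => hcond a y ha1 ha2 hy1 (by omega)⟩
      obtain ⟨t, ht1, htM, rfl⟩ := (hb _).mp hold
      rcases le_or_gt t N with h | h
      · exact ⟨t, ht1, h, rfl⟩
      · -- N < t ≤ M : contradiction
        exfalso
        have hgd : g t ≤ g (t-1) := by
          have := gdown1 (t-1) (by omega) (by omega) (by omega)
          have e : t - 1 + 1 = t := by omega
          rwa [e] at this
        have hx01 : b (t-1) - 1 < b t - 1 := hxlt (t-1) t (by omega) (by omega) (by omega)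
        have hx1i : b t - 1 < i := hxi t ht1 (by omega)
        have hiff := sl_iffs D (b (t-1) - 1) (b t - 1) i hx01 hx1i
        -- C ≤ B ⟹ C ≤ A
        have hCA : sl D (b t - 1) i ≤ sl D (b (t-1) - 1) (b t - 1) := by
          by_contra hc
          push_neg at hc
          have := hiff.2.mp hc
          simp only [hg] at hgd
          linarith
        have := hcond (b (t-1)) i (hbpos (t-1) (by omega) (by omega))
          (blt (t-1) t (by omega) (by omega) (by omega)) (hble t ht1 (by omega)) (le_refl i)
        linarith
    · -- j = i
      have hj : j = i := by omega
      rw [hj] at hcond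
      rcases Nat.eq_or_lt_of_le hNM1 with hNeq | hNlt'
      · exact ⟨M+1, by omega, by omega, by rw [hlast, hj]⟩
      · -- N ≤ M : contradiction
        exfalso
        have hgd : g (M+1) ≤ g M := gdown1 M (by omega) hM (le_refl M)
        have hxM : b M - 1 < i - 1 := by
          have := blt M (M+1) hM (by omega) (by omega)
          rw [hlast] at this
          have := hbpos M hM (by omega); omega
        have hiff := sl_iffs D (b M - 1) (i-1) i hxM (by omega)
        have hgM1 : g (M+1) = sl D (i-1) i := by
          simp only [hg, hlast]
        have hCA : sl D (i-1) i ≤ sl D (b M - 1) (i-1) := by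
          by_contra hc
          push_neg at hc
          have := hiff.2.mp hc
          rw [hgM1] at hgd
          simp only [hg] at hgd
          linarith
        have := hcond (b M) i (hbpos M hM (by omega))
          (by have := blt M (M+1) hM (by omega) (by omega); omega) (le_refl i) (le_refl i)
        rw [show i - 1 = i - 1 from rfl] at this
        have e : b M - 1 = b M - 1 := rfl
        linarith [this]
  · rintro ⟨t, ht1, htN, rfl⟩
    refine ⟨hbpos t ht1 (by omega), hble t ht1 (by omega), ?_⟩
    intro a y ha1 ha2 hy1 hy2
    rcases Nat.lt_or_ge y i with hyi | hyi
    · -- y ≤ i - 1 : use old border property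
      have htM : t ≤ M := by
        by_contra hc
        have : t = M + 1 := by omega
        rw [this, hlast] at ha2 hy1
        omega
      exact (hOB t ht1 htM).2.2 a y ha1 ha2 hy1 (by omega)
    · have hy : y = i := by omega
      rw [hy]
      -- t = 1 impossible since a < b 1 = 1
      rcases Nat.eq_or_lt_of_le ht1 with ht1' | ht2
      · exfalso; rw [← ht1', hb1] at ha2; omega
      -- now 2 ≤ t ≤ N so case A
      have hN2 : 2 ≤ N := by omega
      rcases Nat.eq_or_lt_of_le htN with hteq | htlt
      · -- t = N
        subst hteq
        -- need : sl (a-1) (b N -1) < g N = sl (b N -1) i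
        have hNltM : g (t-1) < g t := by
          rcases hN with ⟨_, hNM', hNlt, _⟩ | ⟨h1', _⟩
          · rw [havg (t-1) (by omega) (by omega), havg t (by omega) hNM'] at hNlt
            exact hNlt
          · omega
        have hx01 : b (t-1) - 1 < b t - 1 := hxlt (t-1) t (by omega) (by omega) (by omega)
        have hx1i : b t - 1 < i := hxi t (by omega) (by omega)
        have hiff := sl_iffs D (b (t-1) - 1) (b t - 1) i hx01 hx1i
        -- B < C gives A < C
        have hAC : sl D (b (t-1) - 1) (b t - 1) < sl D (b t - 1) i :=
          hiff.1.mpr (hiff.1.mp (hiff.2.mpr hNltM))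
        rcases Nat.lt_trichotomy a (b (t-1)) with hav | hav | hav
        · -- a < b (t-1)
          have hOBt1 := (hOB (t-1) (by omega) (by omega)).2.2 a (b t - 1)
            ha1 hav (by have := blt (t-1) t (by omega) (by omega) (by omega); omega)
            (by have := hble t (by omega) (by omega); omega)
          -- sl (a-1) (b(t-1)-1) < sl (b(t-1)-1) (b t -1) < sl (b t -1) i
          have hma : a - 1 < b (t-1) - 1 := by
            have := hbpos (t-1) (by omega) (by omega); omega
          exact sl_bound D (a-1) (b (t-1) - 1) (b t - 1) (sl D (b t - 1) i)
            hma hx01 (lt_trans hOBt1 hAC) hAC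
        · -- a = b (t-1)
          rw [hav]
          exact hAC
        · -- b (t-1) < a < b t : use LemL
          have hkl : b (t-1) - 1 < a - 1 := by
            have := hbpos (t-1) (by omega) (by omega); omega
          have hkr : a - 1 < b t - 1 := by omega
          have hLemL := LemL (t-1) (a-1) (by omega) (by omega) hkl (by
            have e : t - 1 + 1 = t := by omega
            rw [e]; exact hkr)
          have e : t - 1 + 1 = t := by omega
          rw [e] at hLemL
          -- C ≤ A ⟹ C ≤ B ; then B < sl (b t -1) i? no: we need sl (a-1)(b t -1) ≤ sl (b(t-1)-1)(b t -1) < sl(b t -1) i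
          have hiff2 := sl_iffs D (b (t-1) - 1) (a-1) (b t - 1) hkl hkr
          have hCB : sl D (a-1) (b t - 1) ≤ sl D (b (t-1) - 1) (b t - 1) := by
            by_contra hc
            push_neg at hc
            have hBC : sl D (b (t-1) - 1) (b t - 1) < sl D (a-1) (b t - 1) := hc
            have := hiff2.1.mp (hiff2.2.mpr hBC)
            linarith
          exact lt_of_le_of_lt hCB hAC
      · -- t < N
        have htM : t ≤ M := by omega
        have hbtN : b t ≤ b N - 1 := by
          have := blt t N ht1 htlt (by omega); omega
        have hOBt := (hOB t ht1 htM).2.2 a (b N - 1) ha1 ha2 hbtN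
          (by have := hble N (by omega) hNM1; omega)
        -- sl (a-1) (b t -1) < sl (b t -1) (b N -1) < g t
        have hgt : g t < g N := gupN t ht1 htlt
        have hxtN : b t - 1 < b N - 1 := hxlt t N ht1 htlt hNM1
        have hxNi : b N - 1 < i := hxi N (by omega) hNM1
        have hiff := sl_iffs D (b t - 1) (b N - 1) i hxtN hxNi
        -- B < C (g t < g N) gives A < B : sl (b t-1)(b N-1) < g t
        have hAB : sl D (b t - 1) (b N - 1) < sl D (b t - 1) i :=
          hiff.1.mp (hiff.2.mpr hgt)
        exact lt_trans hOBt hAB
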